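/- arXiv:1806.01140 — 3 statements merged into one kernel-verified Lean document; each statement's English description precedes it below -/
import Mathlib

section
/- If P is a Poisson random variable with mean λ > 0 and 0 < ε < 1, then the probability that P < (1-ε)λ is strictly less than exp(-λε²/2). -/
open ProbabilityTheory Real
open scoped NNReal ENNReal Nat

private lemma exp_series_hasSum' (x : ℝ) : HasSum (fun n : ℕ ↦ x ^ n / n !) (Real.exp x) := by
  rw [Real.exp_eq_exp_ℝ]; exact NormedSpace.expSeries_div_hasSum_exp x

private lemma analytic_ineq' {ε : ℝ} (hε0 : 0 < ε) (hε1 : ε < 1) :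
    ε ^ 2 / 2 < ε + (1 - ε) * Real.log (1 - ε) := by
  set f : ℝ → ℝ := fun x ↦ x + (1 - x) * Real.log (1 - x) - x ^ 2 / 2 with hf
  have hder : ∀ x : ℝ, x < 1 → HasDerivAt f (-Real.log (1 - x) - x) x := by
    intro x hx
    have h1x : (0:ℝ) < 1 - x := by linarith
    have h1 : HasDerivAt (fun y : ℝ ↦ 1 - y) (-1) x := (hasDerivAt_id x).const_sub 1
    have h2 : HasDerivAt (fun y : ℝ ↦ Real.log (1 - y)) ((1 - x)⁻¹ * -1) x :=
      (Real.hasDerivAt_log h1x.ne').comp x h1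
    have h3 : HasDerivAt (fun y : ℝ ↦ (1 - y) * Real.log (1 - y))
        (-1 * Real.log (1 - x) + (1 - x) * ((1 - x)⁻¹ * -1)) x := h1.mul h2
    have h4 : HasDerivAt (fun y : ℝ ↦ y ^ 2 / 2) (2 * x ^ 1 / 2) x :=
      (hasDerivAt_pow 2 x).div_const 2
    have h5 := ((hasDerivAt_id x).add h3).sub h4
    refine HasDerivAt.congr_deriv h5 ?_
    rw [mul_inv_cancel_left₀ h1x.ne']
    ring
  have hmono : StrictMonoOn f (Set.Icc 0 ε) := by
    apply strictMonoOn_of_deriv_pos (convex_Icc 0 ε)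
    · intro x hx
      exact (hder x (by linarith [hx.2])).differentiableAt.continuousAt.continuousWithinAt
    · intro x hx
      rw [interior_Icc] at hx
      have hx1 : x < 1 := by linarith [hx.2]
      rw [(hder x hx1).deriv]
      have hlog : Real.log (1 - x) < -x := by
        have h1x : (0:ℝ) < 1 - x := by linarith
        have := Real.add_one_lt_exp (x := -x) (by intro h; simp at h; linarith [hx.1])
        calc Real.log (1 - x) < Real.log (Real.exp (-x)) :=
              Real.log_lt_log h1x (by linarith)
          _ = -x := Real.log_exp _
      linarith
  have h := hmono (Set.left_mem_Icc.mpr hε0.le) (Set.right_mem_Icc.mpr hε0.le) hε0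
  simp only [hf] at h
  simp at h
  linarith

/-- Chernoff bound for the lower tail of a Poisson random variable:
if `P` has law `poissonMeasure lam` with `lam > 0` and `0 < eps < 1`, then
`ℙ[P < (1-eps)·lam] < exp(-lam·eps²/2)`. -/
theorem poisson_chernoff_lower
    {Ω : Type*} [MeasurableSpace Ω] (μ : MeasureTheory.Measure Ω)
    [MeasureTheory.IsProbabilityMeasure μ]
    (P : Ω → ℕ) (lam : ℝ≥0) (hlam : 0 < lam)
    (hP : MeasureTheory.Measure.map P μ = poissonMeasure lam)
    (ε : ℝ) (hε0 : 0 < ε) (hε1 : ε < 1) :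
    μ {ω | (P ω : ℝ) < (1 - ε) * lam}
      < ENNReal.ofReal (Real.exp (-(lam : ℝ) * ε ^ 2 / 2)) := by
  have analytic : ε ^ 2 / 2 < ε + (1 - ε) * Real.log (1 - ε) := analytic_ineq' hε0 hε1
  set c : ℝ := 1 - ε with hc
  have hc0 : (0:ℝ) < c := by simp [hc]; linarith
  have hc1 : c < 1 := by simp [hc]; linarith
  have hlam0 : (0:ℝ) < lam := hlam
  have hlogc : Real.log c < 0 := Real.log_neg hc0 hc1
  set A : Set ℕ := {n : ℕ | (n:ℝ) < c * lam} with hA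
  have hAmeas : MeasurableSet A := trivial
  have hPmeas : AEMeasurable P μ := by
    by_contra h
    rw [MeasureTheory.Measure.map_of_not_aemeasurable h] at hP
    have h2 : (poissonMeasure lam) Set.univ = 1 := MeasureTheory.measure_univ
    rw [← hP] at h2
    simp at h2
  have hstep1 : μ {ω | (P ω : ℝ) < (1 - ε) * lam} = poissonMeasure lam A := by
    have : {ω | (P ω : ℝ) < (1 - ε) * lam} = P ⁻¹' A := rfl
    rw [this, ← MeasureTheory.Measure.map_apply_of_aemeasurable hPmeas hAmeas, hP]
  set K : ℝ := Real.exp (-(c * lam) * Real.log c) with hK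
  set g : ℕ → ℝ := fun n ↦ c ^ n * K * poissonPMFReal lam n with hg
  have hg_nonneg : ∀ n, 0 ≤ g n := fun n ↦ by
    apply mul_nonneg (mul_nonneg (by positivity) (Real.exp_pos _).le) poissonPMFReal_nonneg
  have hg_eq : ∀ n, g n = (K * Real.exp (-(lam:ℝ))) * ((c * lam) ^ n / n !) := by
    intro n
    simp only [hg, poissonPMFReal, mul_pow]
    ring
  have hg_summable : Summable g := by
    rw [funext hg_eq]
    exact (exp_series_hasSum' (c * lam)).summable.mul_left _
  have hg_sum : ∑' n, g n = Real.exp (-(c * lam) * Real.log c + -(lam:ℝ) + c * lam) := by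
    rw [funext hg_eq, tsum_mul_left, (exp_series_hasSum' (c * lam)).tsum_eq]
    rw [hK, ← Real.exp_add, ← Real.exp_add]
  have hterm : ∀ n : ℕ, A.indicator (⇑(poissonPMF lam)) n ≤ ENNReal.ofReal (g n) := by
    intro n
    by_cases hn : n ∈ A
    · rw [Set.indicator_of_mem hn]
      show ENNReal.ofReal (poissonPMFReal lam n) ≤ _
      apply ENNReal.ofReal_le_ofReal
      have h1 : (1:ℝ) ≤ c ^ n * K := by
        have hcn : c ^ n = Real.exp ((n:ℝ) * Real.log c) := by
          rw [Real.exp_nat_mul, Real.exp_log hc0]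
        rw [hcn, hK, ← Real.exp_add]
        apply Real.one_le_exp
        have : (n:ℝ) * Real.log c + -(c * lam) * Real.log c
            = ((n:ℝ) - c * lam) * Real.log c := by ring
        rw [this]
        have hnlt : (n:ℝ) - c * lam < 0 := by
          have := hn
          simp only [hA, Set.mem_setOf_eq] at this
          linarith
        nlinarith [hnlt, hlogc]
      calc poissonPMFReal lam n = 1 * poissonPMFReal lam n := (one_mul _).symm
        _ ≤ c ^ n * K * poissonPMFReal lam n :=
            mul_le_mul_of_nonneg_right h1 poissonPMFReal_nonneg
    · rw [Set.indicator_of_notMem hn]; exact zero_le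
  calc μ {ω | (P ω : ℝ) < (1 - ε) * lam}
      = poissonMeasure lam A := hstep1
    _ = ∑' n, A.indicator (⇑(poissonPMF lam)) n := by
        rw [poissonMeasure, MeasureTheory.Measure.sum_apply _ hAmeas]
        refine tsum_congr fun n => ?_
        rw [MeasureTheory.Measure.smul_apply, MeasureTheory.Measure.dirac_apply, smul_eq_mul]
        by_cases hn : n ∈ A <;> simp [hn, ← poissonPMFReal_ofReal_eq_poissonPMF, poissonPMFReal]
    _ ≤ ∑' n, ENNReal.ofReal (g n) := ENNReal.tsum_le_tsum hterm
    _ = ENNReal.ofReal (∑' n, g n) := (ENNReal.ofReal_tsum_of_nonneg hg_nonneg hg_summable).symm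
    _ < ENNReal.ofReal (Real.exp (-(lam : ℝ) * ε ^ 2 / 2)) := by
        rw [hg_sum]
        rw [ENNReal.ofReal_lt_ofReal_iff (Real.exp_pos _)]
        apply Real.exp_lt_exp.mpr
        have key : (0:ℝ) < lam * ((ε + (1 - ε) * Real.log (1 - ε)) - ε ^ 2 / 2) :=
          mul_pos hlam0 (by linarith)
        have hcc : c = 1 - ε := hc
        nlinarith [key]
end

section
/- If P is a Poisson random variable with mean λ > 0 and 0 < ε < 1, then the probability that P > (1+ε)λ is strictly less than exp(-λε²/4). -/
open ProbabilityTheory Real Nat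
open scoped NNReal ENNReal

lemma aux_log {x : ℝ} (hx0 : 0 < x) (hx1 : x ≤ 1) : x / 2 < Real.log (1 + x) := by
  rw [lt_log_iff_exp_lt (by linarith)]
  have h1 : Real.exp (x/2) * Real.exp (-(x/2)) = 1 := by rw [← Real.exp_add]; simp
  have h2 : 1 - x/2 < Real.exp (-(x/2)) := by
    have := Real.add_one_lt_exp (x := -(x/2)) (by linarith : -(x/2) < 0).ne
    linarith
  nlinarith [Real.exp_pos (x/2), Real.exp_pos (-(x/2))]

lemma key_ineq {ε : ℝ} (h0 : 0 < ε) (h1 : ε < 1) :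
    ε + ε ^ 2 / 4 < (1 + ε) * Real.log (1 + ε) := by
  set f : ℝ → ℝ := fun x => (1 + x) * Real.log (1 + x) - x - x ^ 2 / 4 with hf
  have hd : ∀ x ∈ Set.Icc (0:ℝ) 1, HasDerivAt f (Real.log (1 + x) - x / 2) x := by
    intro x hx
    have hx1 : (0:ℝ) < 1 + x := by linarith [hx.1]
    have hlog : HasDerivAt (fun y : ℝ => Real.log (1 + y)) ((1 + x)⁻¹) x := by
      simpa [Function.comp_def] using (Real.hasDerivAt_log hx1.ne').comp x ((hasDerivAt_id x).const_add 1)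
    have h2 : HasDerivAt (fun y : ℝ => (1 + y) * Real.log (1 + y))
        (1 * Real.log (1 + x) + (1 + x) * (1 + x)⁻¹) x :=
      ((hasDerivAt_id x).const_add 1).mul hlog
    have h3 : HasDerivAt (fun y : ℝ => y ^ 2 / 4) (x / 2) x := by
      have := (hasDerivAt_pow 2 x).div_const 4
      simpa using this.congr_deriv (by ring)
    have := (h2.sub (hasDerivAt_id x)).sub h3
    rw [mul_inv_cancel₀ hx1.ne'] at this
    exact this.congr_deriv (by ring)
  have hmono : StrictMonoOn f (Set.Icc 0 1) := by
    apply strictMonoOn_of_deriv_pos (convex_Icc 0 1)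
    · exact fun x hx => (hd x hx).continuousAt.continuousWithinAt
    · intro x hx
      rw [interior_Icc] at hx
      rw [(hd x ⟨hx.1.le, hx.2.le⟩).deriv]
      linarith [aux_log hx.1 hx.2.le]
  have := hmono (Set.left_mem_Icc.2 zero_le_one) ⟨h0.le, h1.le⟩ h0
  simp only [hf] at this
  simp at this
  linarith

/-- Chernoff bound for the upper tail of a Poisson random variable:
if `P` has law `poissonMeasure lam` with `lam > 0` and `0 < eps < 1`, then
`ℙ[P > (1+eps)·lam] < exp(-lam·eps²/4)`. -/
theorem poisson_chernoff_upper
    {Ω : Type*} [MeasurableSpace Ω] (μ : MeasureTheory.Measure Ω)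
    [MeasureTheory.IsProbabilityMeasure μ]
    (P : Ω → ℕ) (lam : ℝ≥0) (hlam : 0 < lam)
    (hP : MeasureTheory.Measure.map P μ = poissonMeasure lam)
    (ε : ℝ) (hε0 : 0 < ε) (hε1 : ε < 1) :
    μ {ω | (1 + ε) * lam < (P ω : ℝ)}
      < ENNReal.ofReal (Real.exp (-(lam : ℝ) * ε ^ 2 / 4)) := by
  have hlamR : (0:ℝ) < lam := hlam
  set t := Real.log (1 + ε) with ht
  have ht0 : 0 < t := Real.log_pos (by linarith)
  set s : Set ℕ := {n : ℕ | (1 + ε) * lam < (n:ℝ)} with hs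
  have hsm : MeasurableSet s := trivial
  have hPm : AEMeasurable P μ := by
    by_contra h
    rw [MeasureTheory.Measure.map_of_not_aemeasurable h] at hP
    have h1 := MeasureTheory.measure_univ (μ := poissonMeasure lam)
    rw [← hP] at h1; simp at h1
  have hset : {ω | (1 + ε) * lam < (P ω : ℝ)} = P ⁻¹' s := rfl
  have hPM : poissonMeasure lam = (poissonPMF lam).toMeasure := by
    ext t htm
    rw [PMF.toMeasure_apply _ htm, poissonMeasure, MeasureTheory.Measure.sum_apply _ htm]
    congr 1; ext n
    by_cases hn : n ∈ t <;> simp [hn, ← poissonPMFReal_ofReal_eq_poissonPMF, poissonPMFReal]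
  rw [hset, ← MeasureTheory.Measure.map_apply_of_aemeasurable hPm hsm, hP,
    hPM, PMF.toMeasure_apply _ hsm]
  have hcoe : ∀ n, s.indicator (⇑(poissonPMF lam)) n
      = ENNReal.ofReal (s.indicator (poissonPMFReal lam) n) := by
    intro n
    by_cases hn : n ∈ s
    · simp [Set.indicator_of_mem hn]; rfl
    · simp [Set.indicator_of_notMem hn]
  rw [tsum_congr hcoe,
    ← ENNReal.ofReal_tsum_of_nonneg (fun n => Set.indicator_nonneg (fun _ _ => poissonPMFReal_nonneg) n)
      ((poissonPMFRealSum lam).summable.indicator s)]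
  rw [ENNReal.ofReal_lt_ofReal_iff (Real.exp_pos _)]
  -- real inequality
  have hexpsum : HasSum (fun n : ℕ => ((1+ε)*lam)^n / n !) (Real.exp ((1+ε)*lam)) := by
    rw [Real.exp_eq_exp_ℝ]; exact NormedSpace.expSeries_div_hasSum_exp _
  have hg : HasSum (fun n : ℕ => Real.exp (-(lam:ℝ)) * Real.exp (-(t*((1+ε)*lam)))
      * (((1+ε)*(lam:ℝ))^n / n !))
      (Real.exp (-(lam:ℝ)) * Real.exp (-(t*((1+ε)*lam))) * Real.exp ((1+ε)*lam)) :=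
    hexpsum.mul_left _
  have hbound : ∀ n : ℕ, s.indicator (poissonPMFReal lam) n
      ≤ Real.exp (-(lam:ℝ)) * Real.exp (-(t*((1+ε)*lam))) * (((1+ε)*(lam:ℝ))^n / n !) := by
    intro n
    by_cases hn : n ∈ s
    · rw [Set.indicator_of_mem hn]
      have hcn : (1 + ε) * (lam:ℝ) < n := hn
      have h1 : (1:ℝ) ≤ Real.exp (-(t*((1+ε)*lam))) * (1+ε)^n := by
        have he : ((1:ℝ)+ε)^n = Real.exp (t * n) := by
          rw [mul_comm, Real.exp_nat_mul, ht, Real.exp_log (by linarith : (0:ℝ) < 1+ε)]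
        rw [he, ← Real.exp_add]
        apply Real.one_le_exp
        nlinarith
      have h2 : Real.exp (-(lam:ℝ)) * Real.exp (-(t*((1+ε)*lam))) * (((1+ε)*(lam:ℝ))^n / n !)
          = (Real.exp (-(t*((1+ε)*lam))) * (1+ε)^n) * (Real.exp (-(lam:ℝ)) * (lam:ℝ)^n / n !) := by
        rw [mul_pow]; ring
      rw [h2]
      calc poissonPMFReal lam n = Real.exp (-(lam:ℝ)) * (lam:ℝ)^n / n ! := rfl
        _ ≤ _ := le_mul_of_one_le_left (by positivity) h1
    · rw [Set.indicator_of_notMem hn]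
      positivity
  calc ∑' n, s.indicator (poissonPMFReal lam) n
      ≤ Real.exp (-(lam:ℝ)) * Real.exp (-(t*((1+ε)*lam))) * Real.exp ((1+ε)*lam) :=
        hg.tsum_eq ▸ Summable.tsum_le_tsum hbound ((poissonPMFRealSum lam).summable.indicator s) hg.summable
    _ = Real.exp (-(lam:ℝ) + -(t*((1+ε)*lam)) + (1+ε)*lam) := by
        rw [← Real.exp_add, ← Real.exp_add]
    _ < Real.exp (-(lam:ℝ) * ε ^ 2 / 4) := by
        rw [Real.exp_lt_exp]
        nlinarith [mul_pos hlamR (sub_pos.2 (key_ineq hε0 hε1))]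
end

section
/- Let F₁ : ℤ → ℤ and F₂ : ℤ → ℤ be Lipschitz functions (|Fᵢ(x) - Fᵢ(y)| ≤ 1 whenever |x - y| = 1). Suppose there exist integers a < b such that the point (F₁(a), a) lies weakly below the graph of F₂ (i.e., a ≤ F₂(F₁(a))) and the point (F₁(b), b) lies strictly above (i.e., b > F₂(F₁(b))). Then there exist x, y ∈ ℤ with |(F₁(x), x) - (y, F₂(y))|₁ ≤ 1, i.e., the two Lipschitz graphs come within ℓ¹-distance 1 of each other. -/
/-- Two Lipschitz graphs in `ℤ²` that cross come within ℓ¹-distance 1 of each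
other: if `F₁, F₂ : ℤ → ℤ` have increments at most 1 between neighboring
arguments, and `(F₁ a, a)` lies weakly below the graph of `F₂` while
`(F₁ b, b)` lies strictly above it for some `a < b`, then there are `x, y`
with `|F₁ x - y| + |x - F₂ y| ≤ 1`. -/
theorem lipschitz_graphs_close
    (F₁ F₂ : ℤ → ℤ)
    (hF₁ : ∀ x y : ℤ, |x - y| = 1 → |F₁ x - F₁ y| ≤ 1)
    (hF₂ : ∀ x y : ℤ, |x - y| = 1 → |F₂ x - F₂ y| ≤ 1)
    (a b : ℤ) (hab : a < b)
    (ha : a ≤ F₂ (F₁ a)) (hb : F₂ (F₁ b) < b) :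
    ∃ x y : ℤ, |F₁ x - y| + |x - F₂ y| ≤ 1 := by
  let g : ℤ → ℤ := fun x => F₂ (F₁ x) - x
  have hgdef : ∀ x, g x = F₂ (F₁ x) - x := fun _ => rfl
  -- g is almost Lipschitz: g (x+1) ≥ g x - 2
  have hstep : ∀ x : ℤ, g x - 2 ≤ g (x + 1) := by
    intro x
    have h2 : |F₂ (F₁ (x + 1)) - F₂ (F₁ x)| ≤ 1 := by
      rcases eq_or_ne (F₁ (x + 1)) (F₁ x) with h | h
      · simp [h]
      · refine hF₂ _ _ ?_
        have h1 : |F₁ (x + 1) - F₁ x| ≤ 1 := hF₁ _ _ (by simp)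
        have := abs_pos.mpr (sub_ne_zero.mpr h)
        omega
    have := abs_le.mp h2
    rw [hgdef, hgdef]
    omega
  -- find a crossing point
  have hne : ∃ n : ℕ, g (a + n) < 0 := ⟨(b - a).toNat, by
    have h : a + (((b - a).toNat : ℤ)) = b := by omega
    rw [h, hgdef]; omega⟩
  classical
  set N := Nat.find hne with hN
  have hNlt : g (a + N) < 0 := Nat.find_spec hne
  have hNpos : 0 < N := by
    rcases Nat.eq_zero_or_pos N with h | h
    · exfalso; rw [h, hgdef, Nat.cast_zero, add_zero] at hNlt; omega
    · exact h
  have hprev : 0 ≤ g (a + (N - 1 : ℕ)) := by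
    by_contra h
    exact absurd (Nat.find_min hne (show N - 1 < N by omega)) (by push_neg; omega)
  set z := a + ((N - 1 : ℕ) : ℤ) with hz
  have hz1 : a + (N : ℤ) = z + 1 := by
    simp only [hz]; push_cast [Nat.cast_sub hNpos]; ring
  rw [hz1] at hNlt
  rw [hgdef] at hprev hNlt
  rcases eq_or_lt_of_le hprev with h0 | h1
  · refine ⟨z, F₁ z, ?_⟩
    rw [show F₂ (F₁ z) = z by omega]
    simp
  · have hs := hstep z
    rw [hgdef, hgdef] at hs
    refine ⟨z + 1, F₁ (z + 1), ?_⟩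
    rw [show F₂ (F₁ (z + 1)) = z by omega]
    simp
end
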